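/- Let k, l be natural numbers, let R be a commutative ring with 0 ≠ 1, and let f : PEquiv (Fin k) (Fin l) be a partial equivalence (a rook diagram of type (l,k)). Then f is monotone (i.e., the rook diagram is planar) if and only if its associated matrix [f] is in pseudo-echelon form. -/
import Mathlib


/-- A rook matrix: every entry is 0 or 1, and there is at most one entry
equal to 1 in each row and in each column. -/
def IsRookMatrix {l k : ℕ} {R : Type*} [CommRing R]
    (A : Matrix (Fin l) (Fin k) R) : Prop :=
  (∀ i j, A i j = 0 ∨ A i j = 1) ∧
  (∀ i j j', A i j = 1 → A i j' = 1 → j = j') ∧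
  (∀ i i' j, A i j = 1 → A i' j = 1 → i = i')

/-- Pseudo-echelon form: if rows `i < i'` contain nonzero entries in columns
`j` and `j'` respectively, then `j < j'`. -/
def IsPseudoEchelon {l k : ℕ} {R : Type*} [CommRing R]
    (A : Matrix (Fin l) (Fin k) R) : Prop :=
  ∀ i i' j j', i < i' → A i j ≠ 0 → A i' j' ≠ 0 → j < j'

/-- A permutation matrix: the 0–1 matrix of some permutation `σ`, with
entry 1 exactly in the positions `(σ j, j)`. -/
def IsPermMatrix {n : ℕ} {R : Type*} [CommRing R]
    (S : Matrix (Fin n) (Fin n) R) : Prop :=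
  ∃ σ : Equiv.Perm (Fin n), ∀ i j, S i j = if i = σ j then 1 else 0

/-- The matrix `[f]` associated to a partial equivalence (rook diagram)
`f : PEquiv (Fin k) (Fin l)`: the `(q, p)` entry is 1 if `f p = q` and 0
otherwise. -/
def rookMatrixOf {k l : ℕ} (R : Type*) [CommRing R]
    (f : PEquiv (Fin k) (Fin l)) : Matrix (Fin l) (Fin k) R :=
  fun q p => if f p = some q then 1 else 0

/-- A partial equivalence (rook diagram) is monotone (planar) if for all
`p, q` in its domain, `p < q` implies `f p < f q`. -/
def IsMonotonePE {k l : ℕ} (f : PEquiv (Fin k) (Fin l)) : Prop :=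
  ∀ p q i j, i ∈ f p → j ∈ f q → p < q → i < j

theorem rook_planar_iff_pseudoEchelon {k l : ℕ} (R : Type*) [CommRing R]
    [Nontrivial R] (f : PEquiv (Fin k) (Fin l)) :
    IsMonotonePE f ↔ IsPseudoEchelon (rookMatrixOf R f) := by
  constructor
  · intro hmono i i' j j' hii hj hj'
    simp only [rookMatrixOf, ne_eq, ite_eq_right_iff, one_ne_zero, imp_false,
      not_not] at hj hj'
    rcases lt_trichotomy j j' with h | h | h
    · exact h
    · subst h; rw [hj] at hj'; simp at hj'; omega
    · exact absurd (hmono j' j i' i hj' hj h) (by omega)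
  · intro hech p q i j hi hj hpq
    have hA : rookMatrixOf R f i p ≠ 0 := by
      simp [rookMatrixOf, hi.symm ▸ (rfl : f p = f p), show f p = some i from hi]
    have hA' : rookMatrixOf R f j q ≠ 0 := by
      simp [rookMatrixOf, show f q = some j from hj]
    rcases lt_trichotomy i j with h | h | h
    · exact h
    · subst h
      have h1 : p ∈ f.symm i := f.symm.mem_iff_mem.mp hi
      have h2 : q ∈ f.symm i := f.symm.mem_iff_mem.mp hj
      rw [h1] at h2
      simp at h2
      omega
    · exact absurd (hech j i q p h hA' hA) (by omega)
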